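/- Let (A, ≤) be a linearly ordered abelian group and x, y strictly positive elements with m•x = n•y for positive integers m, n. Then for all positive integers k, min{m' ∈ ℤ | m'•x + kn•y ≥ 0} = -km, and hence the comparison index CI(x,y) equals m/n. -/

import Mathlib

open Filter

/-- If `m • x = n • y` for positive integers `m, n` and positive `x, y`
in a linearly ordered abelian group, then for all positive `k`,
`min {m' : ℤ | 0 ≤ m' • x + (k*n) • y} = -(k*m)`, and hence
`CI(x,y) = lim -m(kn)/(kn) = m/n`. -/
theorem stmt1 {A : Type*} [AddCommGroup A] [LinearOrder A] [IsOrderedAddMonoid A] (x y : A)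
    (hx : 0 < x) (hy : 0 < y) (m n : ℕ) (hm : 0 < m) (hn : 0 < n)
    (hmn : (m : ℤ) • x = (n : ℤ) • y) :
    (∀ k : ℕ, 0 < k →
      IsLeast {m' : ℤ | 0 ≤ m' • x + ((k * n : ℕ) : ℤ) • y} (-((k * m : ℕ) : ℤ))) ∧
    Tendsto (fun k : ℕ => -((-((k * m : ℕ) : ℤ) : ℝ) / ((k * n : ℕ) : ℝ)))
      atTop (nhds ((m : ℝ) / (n : ℝ))) := by
  have key : ∀ k : ℕ, ((k * n : ℕ) : ℤ) • y = ((k * m : ℕ) : ℤ) • x := by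
    intro k
    push_cast
    rw [mul_smul, mul_smul, hmn]
  constructor
  · intro k hk
    constructor
    · show 0 ≤ _
      rw [key, neg_smul, neg_add_cancel]
    · intro m' hm'
      have hm' : (0 : A) ≤ m' • x + ((k * n : ℕ) : ℤ) • y := hm'
      rw [key, ← add_smul] at hm'
      by_contra h
      push_neg at h
      have hlt : m' + ((k * m : ℕ) : ℤ) < 0 := by omega
      have : 0 < (-(m' + ((k * m : ℕ) : ℤ))) • x := zsmul_pos hx (by omega)
      rw [neg_smul] at this
      exact absurd hm' (not_le.mpr (neg_pos.mp this))
  · apply Tendsto.congr' _ tendsto_const_nhds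
    filter_upwards [eventually_ge_atTop 1] with k hk
    have hk0 : (k : ℝ) ≠ 0 := by positivity
    push_cast
    field_simp
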